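/- Let p₁ and p₂ be two distinct non-collinear points of W₃(q), i.e. two 1-dimensional subspaces ⟨u⟩ ≠ ⟨v⟩ of V with f(u,v) ≠ 0. Then the code C = {p₁, p₂} in the point-line incidence graph of W₃(q) has minimum distance 4 and is neighbour-transitive. -/

import Mathlib

/-- The standard nondegenerate alternating bilinear form on `𝔽_q⁴`:
`f(x,y) = x₁y₂ − x₂y₁ + x₃y₄ − x₄y₃`. -/
def sform {F : Type*} [Field F] (x y : Fin 4 → F) : F :=
  x 0 * y 1 - x 1 * y 0 + x 2 * y 3 - x 3 * y 2

/-- A line of `W₃(q)`: a totally isotropic `2`-dimensional subspace of `𝔽_q⁴`. -/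
def IsIsoLine (F : Type*) [Field F] (W : Submodule F (Fin 4 → F)) : Prop :=
  Module.finrank F W = 2 ∧ ∀ x ∈ W, ∀ y ∈ W, sform x y = 0

/-- The points of `W₃(q)`: the `1`-dimensional subspaces of `𝔽_q⁴`. -/
def Pt (F : Type*) [Field F] := {W : Submodule F (Fin 4 → F) // Module.finrank F W = 1}

/-- The lines of `W₃(q)`: the totally isotropic `2`-dimensional subspaces of `𝔽_q⁴`. -/
def Ln (F : Type*) [Field F] := {W : Submodule F (Fin 4 → F) // IsIsoLine F W}

/-- The point-line incidence graph of the generalised quadrangle `W₃(q)`. -/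
def W3 (F : Type*) [Field F] : SimpleGraph (Pt F ⊕ Ln F) where
  Adj x y :=
    (∃ p ℓ, x = Sum.inl p ∧ y = Sum.inr ℓ ∧ p.1 ≤ ℓ.1) ∨
    (∃ p ℓ, x = Sum.inr ℓ ∧ y = Sum.inl p ∧ p.1 ≤ ℓ.1)
  symm := ⟨by
    rintro x y (⟨p, ℓ, rfl, rfl, h⟩ | ⟨p, ℓ, rfl, rfl, h⟩)
    · exact Or.inr ⟨p, ℓ, rfl, rfl, h⟩
    · exact Or.inl ⟨p, ℓ, rfl, rfl, h⟩⟩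
  loopless := ⟨by
    rintro x (⟨p, ℓ, rfl, h, -⟩ | ⟨p, ℓ, rfl, h, -⟩) <;> exact absurd h (by simp)⟩

/-- The minimum distance of a code `C` in a graph `Γ`. -/
noncomputable def minDist {V : Type*} (Γ : SimpleGraph V) (C : Set V) : ℕ :=
  sInf {d | ∃ x ∈ C, ∃ y ∈ C, x ≠ y ∧ Γ.dist x y = d}

/-- The distance from a vertex `γ` to a code `C`. -/
noncomputable def distToCode {V : Type*} (Γ : SimpleGraph V) (C : Set V) (γ : V) : ℕ :=
  sInf {d | ∃ x ∈ C, Γ.dist γ x = d}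

/-- The covering radius of a code `C` in a graph `Γ`. -/
noncomputable def covRad {V : Type*} (Γ : SimpleGraph V) (C : Set V) : ℕ :=
  sSup {d | ∃ γ : V, distToCode Γ C γ = d}

/-- `nbhd Γ C i` is the set `C_i` of vertices at distance exactly `i` from `C`. -/
def nbhd {V : Type*} (Γ : SimpleGraph V) (C : Set V) (i : ℕ) : Set V :=
  {γ | distToCode Γ C γ = i}

/-- `g` is an automorphism of the graph `Γ`. -/
def IsGraphAut {V : Type*} (Γ : SimpleGraph V) (g : V ≃ V) : Prop :=
  ∀ x y : V, Γ.Adj (g x) (g y) ↔ Γ.Adj x y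

/-- `Aut(C)` (automorphisms of `Γ` preserving `C` setwise) acts transitively on `S`. -/
def TransOn {V : Type*} (Γ : SimpleGraph V) (C S : Set V) : Prop :=
  ∀ x ∈ S, ∀ y ∈ S, ∃ g : V ≃ V, IsGraphAut Γ g ∧ (∀ v, g v ∈ C ↔ v ∈ C) ∧ g x = y

/-- `C` is neighbour-transitive: `Aut(C)` is transitive on `C` and on `C₁`. -/
def NeighbourTransitive {V : Type*} (Γ : SimpleGraph V) (C : Set V) : Prop :=
  TransOn Γ C C ∧ TransOn Γ C (nbhd Γ C 1)

namespace Stmt7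
open Submodule Module

variable {F : Type*} [Field F]

/-! ### Basic properties of the form -/

lemma sform_self (x : Fin 4 → F) : sform x x = 0 := by unfold sform; ring

lemma sform_skew (x y : Fin 4 → F) : sform x y = - sform y x := by unfold sform; ring

lemma sform_neg_left (x y : Fin 4 → F) : sform (-x) y = - sform x y := by
  simp [sform]; ring

lemma sform_smul_left (a : F) (x y : Fin 4 → F) : sform (a • x) y = a * sform x y := by
  simp [sform]; ring

lemma sform_smul_right (a : F) (x y : Fin 4 → F) : sform x (a • y) = a * sform x y := by
  simp [sform]; ring

lemma sform_add_smul_right (t : F) (x y p : Fin 4 → F) :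
    sform x (y + t • p) = sform x y + t * sform x p := by
  simp [sform]; ring

lemma sform_xab_right (a b : F) (p q x y : Fin 4 → F) :
    sform x (y + a • p + b • q) = sform x y + a * sform x p + b * sform x q := by
  simp [sform]; ring

lemma sform_comb_left (a b c d : F) (p q r s y : Fin 4 → F) :
    sform (a • p + b • q + c • r + d • s) y
      = a * sform p y + b * sform q y + c * sform r y + d * sform s y := by
  simp [sform]; ring

lemma sform_comb_right (a b c d : F) (p q r s x : Fin 4 → F) :
    sform x (a • p + b • q + c • r + d • s)
      = a * sform x p + b * sform x q + c * sform x r + d * sform x s := by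
  simp [sform]; ring

lemma sform_pair (a b a' b' : F) (x y : Fin 4 → F) :
    sform (a • x + b • y) (a' • x + b' • y) = (a * b' - a' * b) * sform x y := by
  simp [sform]; ring

lemma sform_nondeg {x : Fin 4 → F} (h : ∀ y, sform x y = 0) : x = 0 := by
  funext i
  fin_cases i
  · simpa [sform] using h ![0, 1, 0, 0]
  · have := h ![1, 0, 0, 0]; simp [sform] at this; simpa using this
  · simpa [sform] using h ![0, 0, 0, 1]
  · have := h ![0, 0, 1, 0]; simp [sform] at this; simpa using this

lemma span_neg_singleton (x : Fin 4 → F) : span F {-x} = span F {x} := by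
  rw [← Set.neg_singleton, span_neg]

/-! ### Symplectic systems -/

/-- A symplectic system: `u, v, w, z` with `f(u,v) = f(w,z) = c` and all the
cross pairings zero.  When `c ≠ 0` this is a (scaled) symplectic basis. -/
structure SympSys (c : F) (u v w z : Fin 4 → F) : Prop where
  huv : sform u v = c
  hwz : sform w z = c
  huw : sform u w = 0
  huz : sform u z = 0
  hvw : sform v w = 0
  hvz : sform v z = 0

namespace SympSys

variable {c : F} {u v w z : Fin 4 → F}

lemma hvu (h : SympSys c u v w z) : sform v u = -c := by rw [sform_skew, h.huv]
lemma hzw (h : SympSys c u v w z) : sform z w = -c := by rw [sform_skew, h.hwz]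
lemma hwu (h : SympSys c u v w z) : sform w u = 0 := by rw [sform_skew, h.huw, neg_zero]
lemma hzu (h : SympSys c u v w z) : sform z u = 0 := by rw [sform_skew, h.huz, neg_zero]
lemma hwv (h : SympSys c u v w z) : sform w v = 0 := by rw [sform_skew, h.hvw, neg_zero]
lemma hzv (h : SympSys c u v w z) : sform z v = 0 := by rw [sform_skew, h.hvz, neg_zero]

/-- Rotating a symplectic system: `(u,v) ↦ (v,-u)`. -/
lemma swap (h : SympSys c u v w z) : SympSys c v (-u) w z where
  huv := by rw [sform_skew, sform_neg_left, h.huv, neg_neg]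
  hwz := h.hwz
  huw := h.hvw
  huz := h.hvz
  hvw := by rw [sform_neg_left, h.huw, neg_zero]
  hvz := by rw [sform_neg_left, h.huz, neg_zero]

end SympSys

/-! ### The standard map between two symplectic systems -/

/-- The linear map sending the symplectic system `u,v,w,z` to `u',v',w',z'`. -/
def gfun (c : F) (u v w z u' v' w' z' : Fin 4 → F) (x : Fin 4 → F) : Fin 4 → F :=
  (c⁻¹ * sform x v) • u' + (-(c⁻¹ * sform x u)) • v'
    + (c⁻¹ * sform x z) • w' + (-(c⁻¹ * sform x w)) • z'

variable {c c' : F} {u v w z u' v' w' z' : Fin 4 → F}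

lemma gfun_eval_u (h : SympSys c u v w z) (hc : c ≠ 0) (u' v' w' z' : Fin 4 → F) :
    gfun c u v w z u' v' w' z' u = u' := by
  unfold gfun
  rw [h.huv, sform_self, h.huz, h.huw]
  simp [inv_mul_cancel₀ hc]

lemma gfun_eval_v (h : SympSys c u v w z) (hc : c ≠ 0) (u' v' w' z' : Fin 4 → F) :
    gfun c u v w z u' v' w' z' v = v' := by
  unfold gfun
  rw [sform_self, h.hvu, h.hvz, h.hvw]
  simp [inv_mul_cancel₀ hc]

lemma gfun_eval_w (h : SympSys c u v w z) (hc : c ≠ 0) (u' v' w' z' : Fin 4 → F) :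
    gfun c u v w z u' v' w' z' w = w' := by
  unfold gfun
  rw [sform_self, h.hwu, h.hwv, h.hwz]
  simp [inv_mul_cancel₀ hc]

lemma gfun_eval_z (h : SympSys c u v w z) (hc : c ≠ 0) (u' v' w' z' : Fin 4 → F) :
    gfun c u v w z u' v' w' z' z = z' := by
  unfold gfun
  rw [sform_self, h.hzu, h.hzv, h.hzw]
  simp [inv_mul_cancel₀ hc]

lemma gfun_comb (a b e f : F) (p q r s : Fin 4 → F) :
    gfun c u v w z u' v' w' z' (a • p + b • q + e • r + f • s)
      = a • gfun c u v w z u' v' w' z' p + b • gfun c u v w z u' v' w' z' q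
        + e • gfun c u v w z u' v' w' z' r + f • gfun c u v w z u' v' w' z' s := by
  funext i
  simp [gfun, sform]
  ring

lemma SympSys.li (h : SympSys c u v w z) (hc : c ≠ 0) :
    LinearIndependent F ![u, v, w, z] := by
  rw [Fintype.linearIndependent_iff]
  intro a ha
  have key : ∀ y : Fin 4 → F, sform (a 0 • u + a 1 • v + a 2 • w + a 3 • z) y = 0 := by
    intro y
    rw [show a 0 • u + a 1 • v + a 2 • w + a 3 • z = 0 by
      simpa [Fin.sum_univ_four] using ha]
    simp [sform]
  have h0 : a 0 * c = 0 := by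
    have := key v; rwa [sform_comb_left, h.huv, sform_self, h.hwv, h.hzv,
      mul_zero, mul_zero, mul_zero, add_zero, add_zero, add_zero] at this
  have h1 : a 1 * c = 0 := by
    have := key u
    rw [sform_comb_left, sform_self, h.hvu, h.hwu, h.hzu] at this
    simpa using this
  have h2 : a 2 * c = 0 := by
    have := key z
    rw [sform_comb_left, h.huz, h.hvz, h.hwz, sform_self] at this
    simpa using this
  have h3 : a 3 * c = 0 := by
    have := key w
    rw [sform_comb_left, h.huw, h.hvw, sform_self, h.hzw] at this
    simpa using this
  intro i
  fin_cases i <;>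
    first
      | exact (mul_eq_zero.mp h0).resolve_right hc
      | exact (mul_eq_zero.mp h1).resolve_right hc
      | exact (mul_eq_zero.mp h2).resolve_right hc
      | exact (mul_eq_zero.mp h3).resolve_right hc

lemma gfun_decomp (h : SympSys c u v w z) (hc : c ≠ 0) (x : Fin 4 → F) :
    gfun c u v w z u v w z x = x := by
  have hsp : span F (Set.range ![u, v, w, z]) = ⊤ :=
    (h.li hc).span_eq_top_of_card_eq_finrank (by simp [Module.finrank_pi])
  have hx : x ∈ span F (Set.range ![u, v, w, z]) := hsp ▸ Submodule.mem_top
  rw [mem_span_range_iff_exists_fun] at hx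
  obtain ⟨a, ha⟩ := hx
  have hx' : x = a 0 • u + a 1 • v + a 2 • w + a 3 • z := by
    rw [← ha]; simp [Fin.sum_univ_four]
  rw [hx', gfun_comb, gfun_eval_u h hc, gfun_eval_v h hc, gfun_eval_w h hc,
    gfun_eval_z h hc]

lemma gfun_sim (h : SympSys c u v w z) (h' : SympSys c' u' v' w' z') (hc : c ≠ 0)
    (x y : Fin 4 → F) :
    sform (gfun c u v w z u' v' w' z' x) (gfun c u v w z u' v' w' z' y)
      = (c⁻¹ * c') * sform x y := by
  have hxy : sform x y
      = (c⁻¹ * sform y v) * sform x u + (-(c⁻¹ * sform y u)) * sform x v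
        + (c⁻¹ * sform y z) * sform x w + (-(c⁻¹ * sform y w)) * sform x z := by
    conv_lhs => rw [← gfun_decomp h hc y]
    rw [gfun, sform_comb_right]
  rw [gfun, gfun, sform_comb_left]
  simp only [sform_comb_right]
  rw [hxy, h'.huv, h'.hwz, h'.huw, h'.huz, h'.hvw, h'.hvz, h'.hvu, h'.hzw, h'.hwu,
    h'.hzu, h'.hwv, h'.hzv, sform_self, sform_self, sform_self, sform_self]
  ring

lemma gfun_inv (h : SympSys c u v w z) (h' : SympSys c' u' v' w' z') (hc : c ≠ 0)
    (hc' : c' ≠ 0) (x : Fin 4 → F) :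
    gfun c' u' v' w' z' u v w z (gfun c u v w z u' v' w' z' x) = x := by
  conv_rhs => rw [← gfun_decomp h hc x]
  rw [gfun, gfun, gfun]
  simp only [sform_comb_left]
  rw [h'.huv, h'.hwz, h'.huw, h'.huz, h'.hvw, h'.hvz, h'.hvu, h'.hzw, h'.hwu,
    h'.hzu, h'.hwv, h'.hzv, sform_self, sform_self, sform_self, sform_self]
  funext i
  simp only [Pi.add_apply, Pi.smul_apply, smul_eq_mul]
  field_simp
  ring

/-- The linear equivalence carrying one symplectic system to another. -/
def gequiv (h : SympSys c u v w z) (h' : SympSys c' u' v' w' z') (hc : c ≠ 0)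
    (hc' : c' ≠ 0) : (Fin 4 → F) ≃ₗ[F] (Fin 4 → F) where
  toFun := gfun c u v w z u' v' w' z'
  invFun := gfun c' u' v' w' z' u v w z
  left_inv := gfun_inv h h' hc hc'
  right_inv := gfun_inv h' h hc' hc
  map_add' x y := by funext i; simp [gfun, sform]; ring
  map_smul' a x := by funext i; simp [gfun, sform]; ring

lemma gequiv_apply (h : SympSys c u v w z) (h' : SympSys c' u' v' w' z') (hc : c ≠ 0)
    (hc' : c' ≠ 0) (x : Fin 4 → F) :
    gequiv h h' hc hc' x = gfun c u v w z u' v' w' z' x := rfl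

/-! ### Completing a hyperbolic pair to a symplectic system -/

lemma exists_perp (u v : Fin 4 → F) :
    ∃ w : Fin 4 → F, w ≠ 0 ∧ sform u w = 0 ∧ sform v w = 0 := by
  let A : (Fin 4 → F) →ₗ[F] (Fin 2 → F) :=
    { toFun := fun x => ![sform u x, sform v x]
      map_add' := by intro x y; funext i; fin_cases i <;> simp [sform] <;> ring
      map_smul' := by intro a x; funext i; fin_cases i <;> simp [sform] <;> ring }
  have hker : LinearMap.ker A ≠ ⊥ := by
    intro hbot
    have h1 := LinearMap.finrank_range_add_finrank_ker A
    rw [hbot, finrank_bot, add_zero] at h1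
    have h2 : finrank F (LinearMap.range A) ≤ finrank F (Fin 2 → F) :=
      Submodule.finrank_le _
    rw [h1] at h2
    norm_num [Module.finrank_pi] at h2
  obtain ⟨w, hwker, hw0⟩ := (Submodule.ne_bot_iff _).mp hker
  have hA : A w = 0 := LinearMap.mem_ker.mp hwker
  have h0 : sform u w = 0 := by simpa [A] using congrFun hA 0
  have h1 : sform v w = 0 := by simpa [A] using congrFun hA 1
  exact ⟨w, hw0, h0, h1⟩

lemma exists_completion {u v w : Fin 4 → F} {c : F} (h : sform u v = c) (hc : c ≠ 0)
    (hw : w ≠ 0) (hwu : sform u w = 0) (hwv : sform v w = 0) :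
    ∃ z, SympSys c u v w z := by
  have hwu' : sform w u = 0 := by rw [sform_skew, hwu, neg_zero]
  have hwv' : sform w v = 0 := by rw [sform_skew, hwv, neg_zero]
  obtain ⟨x, hx⟩ : ∃ x, sform w x ≠ 0 := by
    by_contra hcon; push_neg at hcon; exact hw (sform_nondeg hcon)
  set z₁ : Fin 4 → F := x + (-(c⁻¹ * sform x v)) • u + (c⁻¹ * sform x u) • v with hz₁
  have hwz₁ : sform w z₁ = sform w x := by
    rw [hz₁, sform_xab_right, hwu', hwv']; ring
  have huz₁ : sform u z₁ = 0 := by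
    rw [hz₁, sform_xab_right, sform_self, h, sform_skew u x]
    field_simp
    ring
  have hvz₁ : sform v z₁ = 0 := by
    rw [hz₁, sform_xab_right, sform_self, sform_skew v u, h, sform_skew v x]
    field_simp
    ring
  refine ⟨(c / sform w x) • z₁, h, ?_, hwu, ?_, hwv, ?_⟩
  · rw [sform_smul_right, hwz₁]
    field_simp
  · rw [sform_smul_right, huz₁, mul_zero]
  · rw [sform_smul_right, hvz₁, mul_zero]

/-! ### Isotropic lines spanned by pairs -/

lemma isoLine_pair {x y : Fin 4 → F} (h0 : sform x y = 0) (hy : y ≠ 0)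
    (hxy : ∀ a : F, a • y ≠ x) : IsIsoLine F (span F {x, y}) := by
  have hli : LinearIndependent F ![x, y] := linearIndependent_fin2.mpr ⟨hy, hxy⟩
  constructor
  · rw [show ({x, y} : Set (Fin 4 → F)) = Set.range ![x, y] from
      (Matrix.range_cons_cons_empty x y _).symm, finrank_span_eq_card hli]
    simp
  · intro a ha b hb
    rw [Submodule.mem_span_pair] at ha hb
    obtain ⟨a1, a2, rfl⟩ := ha
    obtain ⟨b1, b2, rfl⟩ := hb
    rw [sform_pair, h0, mul_zero]

/-- Any line of `W₃(q)` through a point `⟨p⟩` is spanned by `p` and a vector `w`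
orthogonal to both `p` and a given auxiliary vector `q` (with `f(q,p) ≠ 0`). -/
lemma line_norm {p q : Fin 4 → F} (hqp : sform q p ≠ 0) (hp : p ≠ 0) (ℓ : Ln F)
    (hl : span F {p} ≤ ℓ.1) :
    ∃ w, w ≠ 0 ∧ sform p w = 0 ∧ sform q w = 0 ∧ ℓ.1 = span F {p, w} := by
  have hpl : p ∈ ℓ.1 := hl (Submodule.mem_span_singleton_self p)
  have hlt : span F {p} < ℓ.1 := lt_of_le_of_ne hl (fun hEq => by
    have h2 := ℓ.2.1
    rw [← hEq, finrank_span_singleton hp] at h2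
    norm_num at h2)
  obtain ⟨w₀, hw₀l, hw₀p⟩ := SetLike.exists_of_lt hlt
  set w : Fin 4 → F := w₀ + (-(sform q w₀ / sform q p)) • p with hwdef
  have hwl : w ∈ ℓ.1 := add_mem hw₀l (Submodule.smul_mem _ _ hpl)
  have hpw : sform p w = 0 := by
    rw [hwdef, sform_add_smul_right, sform_self, mul_zero, add_zero]
    exact ℓ.2.2 p hpl w₀ hw₀l
  have hqw : sform q w = 0 := by
    rw [hwdef, sform_add_smul_right]
    field_simp
    ring
  have hwspan : w ∉ span F {p} := by
    intro hmem
    apply hw₀p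
    have hw₀ : w₀ = w + (sform q w₀ / sform q p) • p := by
      rw [hwdef]; module
    rw [hw₀]
    exact add_mem hmem (Submodule.smul_mem _ _ (Submodule.mem_span_singleton_self p))
  have hw0 : w ≠ 0 := fun h0 => hwspan (h0 ▸ zero_mem _)
  have hli : LinearIndependent F ![w, p] := linearIndependent_fin2.mpr
    ⟨hp, fun a ha => hwspan (Submodule.mem_span_singleton.mpr ⟨a, ha⟩)⟩
  have hsub : span F {p, w} ≤ ℓ.1 := span_le.mpr (by
    rw [Set.insert_subset_iff, Set.singleton_subset_iff]
    exact ⟨hpl, hwl⟩)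
  have hrange : ({p, w} : Set (Fin 4 → F)) = Set.range ![w, p] := by
    rw [Matrix.range_cons_cons_empty, Set.pair_comm]
  have heq : span F {p, w} = ℓ.1 := Submodule.eq_of_le_of_finrank_le hsub (by
    rw [ℓ.2.1, hrange, finrank_span_eq_card hli]
    simp)
  exact ⟨w, hw0, hpw, hqw, heq.symm⟩

/-! ### Adjacency in `W₃(q)` -/

lemma W3_adj_inl_inr (p : Pt F) (ℓ : Ln F) :
    (W3 F).Adj (Sum.inl p) (Sum.inr ℓ) ↔ p.1 ≤ ℓ.1 := by
  constructor
  · rintro (⟨p', ℓ', hp, hl, hle⟩ | ⟨p', ℓ', hp, hl, hle⟩)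
    · obtain rfl := Sum.inl.inj hp
      obtain rfl := Sum.inr.inj hl
      exact hle
    · exact absurd hp (by simp)
  · intro h; exact Or.inl ⟨p, ℓ, rfl, rfl, h⟩

lemma W3_adj_inr_inl (ℓ : Ln F) (p : Pt F) :
    (W3 F).Adj (Sum.inr ℓ) (Sum.inl p) ↔ p.1 ≤ ℓ.1 := by
  constructor
  · rintro (⟨p', ℓ', hp, hl, hle⟩ | ⟨p', ℓ', hp, hl, hle⟩)
    · exact absurd hp (by simp)
    · obtain rfl := Sum.inr.inj hp
      obtain rfl := Sum.inl.inj hl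
      exact hle
  · intro h; exact Or.inr ⟨p, ℓ, rfl, rfl, h⟩

lemma W3_not_adj_inl_inl (p q : Pt F) : ¬ (W3 F).Adj (Sum.inl p) (Sum.inl q) := by
  rintro (⟨p', ℓ', hp, hl, -⟩ | ⟨p', ℓ', hp, hl, -⟩) <;> simp at hp hl

lemma W3_not_adj_inr_inr (ℓ m : Ln F) : ¬ (W3 F).Adj (Sum.inr ℓ) (Sum.inr m) := by
  rintro (⟨p', ℓ', hp, hl, -⟩ | ⟨p', ℓ', hp, hl, -⟩) <;> simp at hp hl

lemma walk_parity {x y : Pt F ⊕ Ln F} (p : (W3 F).Walk x y) :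
    Even p.length ↔ x.isLeft = y.isLeft := by
  induction p with
  | nil => simp
  | @cons a b c h p ih =>
    rw [SimpleGraph.Walk.length_cons, Nat.even_add_one, ih]
    rcases h with ⟨p', ℓ', rfl, rfl, -⟩ | ⟨p', ℓ', rfl, rfl, -⟩ <;> cases c <;> simp

/-! ### Automorphisms induced by similitudes -/

lemma exists_gaut (e : (Fin 4 → F) ≃ₗ[F] (Fin 4 → F)) (μ : F) (hμ : μ ≠ 0)
    (hsim : ∀ x y, sform (e x) (e y) = μ * sform x y) :
    ∃ g : (Pt F ⊕ Ln F) ≃ (Pt F ⊕ Ln F), IsGraphAut (W3 F) g ∧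
      (∀ p : Pt F, ∃ q : Pt F, g (Sum.inl p) = Sum.inl q ∧
        q.1 = p.1.map (e : (Fin 4 → F) →ₗ[F] (Fin 4 → F))) ∧
      (∀ ℓ : Ln F, ∃ m : Ln F, g (Sum.inr ℓ) = Sum.inr m ∧
        m.1 = ℓ.1.map (e : (Fin 4 → F) →ₗ[F] (Fin 4 → F))) := by
  have hsim' : ∀ x y, sform (e.symm x) (e.symm y) = μ⁻¹ * sform x y := by
    intro x y
    have h1 := hsim (e.symm x) (e.symm y)
    rw [e.apply_symm_apply, e.apply_symm_apply] at h1
    rw [h1]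
    field_simp
  have hinv : ∀ (e' : (Fin 4 → F) ≃ₗ[F] (Fin 4 → F)) (W : Submodule F (Fin 4 → F)),
      (W.map (e' : (Fin 4 → F) →ₗ[F] (Fin 4 → F))).map
        (e'.symm : (Fin 4 → F) →ₗ[F] (Fin 4 → F)) = W := by
    intro e' W
    ext t
    simp only [Submodule.mem_map]
    constructor
    · rintro ⟨yy, ⟨s, hs, rfl⟩, rfl⟩
      simpa using hs
    · intro ht
      exact ⟨e' t, ⟨t, ht, rfl⟩, by simp⟩
  have hiso : ∀ (e' : (Fin 4 → F) ≃ₗ[F] (Fin 4 → F)) (μ' : F),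
      (∀ x y, sform (e' x) (e' y) = μ' * sform x y) →
      ∀ W : Submodule F (Fin 4 → F), IsIsoLine F W →
        IsIsoLine F (W.map (e' : (Fin 4 → F) →ₗ[F] (Fin 4 → F))) := by
    intro e' μ' hs W hW
    constructor
    · rw [LinearEquiv.finrank_map_eq]; exact hW.1
    · rintro x hx y hy
      rw [Submodule.mem_map] at hx hy
      obtain ⟨a, ha, rfl⟩ := hx
      obtain ⟨b, hb, rfl⟩ := hy
      show sform (e' a) (e' b) = 0
      rw [hs, hW.2 a ha b hb, mul_zero]
  let f1 : Pt F → Pt F := fun p =>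
    ⟨p.1.map (e : (Fin 4 → F) →ₗ[F] (Fin 4 → F)),
      by rw [LinearEquiv.finrank_map_eq]; exact p.2⟩
  let f2 : Ln F → Ln F := fun ℓ =>
    ⟨ℓ.1.map (e : (Fin 4 → F) →ₗ[F] (Fin 4 → F)), hiso e μ hsim ℓ.1 ℓ.2⟩
  let f1' : Pt F → Pt F := fun p =>
    ⟨p.1.map (e.symm : (Fin 4 → F) →ₗ[F] (Fin 4 → F)),
      by rw [LinearEquiv.finrank_map_eq]; exact p.2⟩
  let f2' : Ln F → Ln F := fun ℓ =>
    ⟨ℓ.1.map (e.symm : (Fin 4 → F) →ₗ[F] (Fin 4 → F)), hiso e.symm μ⁻¹ hsim' ℓ.1 ℓ.2⟩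
  refine ⟨⟨Sum.map f1 f2, Sum.map f1' f2', ?_, ?_⟩, ?_, ?_, ?_⟩
  · rintro (p | ℓ)
    · exact congrArg Sum.inl (Subtype.ext (hinv e p.1))
    · exact congrArg Sum.inr (Subtype.ext (hinv e ℓ.1))
  · rintro (p | ℓ)
    · refine congrArg Sum.inl (Subtype.ext ?_)
      have := hinv e.symm p.1
      rwa [LinearEquiv.symm_symm] at this
    · refine congrArg Sum.inr (Subtype.ext ?_)
      have := hinv e.symm ℓ.1
      rwa [LinearEquiv.symm_symm] at this
  · rintro (p | ℓ) (q | m)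
    · constructor <;> intro hadj
      · exact absurd hadj (W3_not_adj_inl_inl _ _)
      · exact absurd hadj (W3_not_adj_inl_inl _ _)
    · show (W3 F).Adj (Sum.inl (f1 p)) (Sum.inr (f2 m)) ↔ _
      rw [W3_adj_inl_inr, W3_adj_inl_inr]
      constructor
      · intro h
        have h2 : ((p.1.map (e : (Fin 4 → F) →ₗ[F] (Fin 4 → F))).map
              (e.symm : (Fin 4 → F) →ₗ[F] (Fin 4 → F)))
            ≤ ((m.1.map (e : (Fin 4 → F) →ₗ[F] (Fin 4 → F))).map
              (e.symm : (Fin 4 → F) →ₗ[F] (Fin 4 → F))) := Submodule.map_mono h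
        rwa [hinv, hinv] at h2
      · exact fun h => Submodule.map_mono h
    · show (W3 F).Adj (Sum.inr (f2 ℓ)) (Sum.inl (f1 q)) ↔ _
      rw [W3_adj_inr_inl, W3_adj_inr_inl]
      constructor
      · intro h
        have h2 : ((q.1.map (e : (Fin 4 → F) →ₗ[F] (Fin 4 → F))).map
              (e.symm : (Fin 4 → F) →ₗ[F] (Fin 4 → F)))
            ≤ ((ℓ.1.map (e : (Fin 4 → F) →ₗ[F] (Fin 4 → F))).map
              (e.symm : (Fin 4 → F) →ₗ[F] (Fin 4 → F))) := Submodule.map_mono h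
        rwa [hinv, hinv] at h2
      · exact fun h => Submodule.map_mono h
    · constructor <;> intro hadj
      · exact absurd hadj (W3_not_adj_inr_inr _ _)
      · exact absurd hadj (W3_not_adj_inr_inr _ _)
  · exact fun p => ⟨f1 p, rfl, rfl⟩
  · exact fun ℓ => ⟨f2 ℓ, rfl, rfl⟩

lemma pres_two {α : Type*} (g : α ≃ α) {a b : α}
    (h : (g a = a ∧ g b = b) ∨ (g a = b ∧ g b = a)) (x : α) :
    g x ∈ ({a, b} : Set α) ↔ x ∈ ({a, b} : Set α) := by
  simp only [Set.mem_insert_iff, Set.mem_singleton_iff]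
  rcases h with ⟨h1, h2⟩ | ⟨h1, h2⟩
  · constructor
    · rintro (hx | hx)
      exacts [Or.inl (g.injective (hx.trans h1.symm)),
        Or.inr (g.injective (hx.trans h2.symm))]
    · rintro (rfl | rfl)
      exacts [Or.inl h1, Or.inr h2]
  · constructor
    · rintro (hx | hx)
      exacts [Or.inr (g.injective (hx.trans h2.symm)),
        Or.inl (g.injective (hx.trans h1.symm))]
    · rintro (rfl | rfl)
      exacts [Or.inr h1, Or.inl h2]

lemma point_image {e : (Fin 4 → F) ≃ₗ[F] (Fin 4 → F)} {g : (Pt F ⊕ Ln F) ≃ (Pt F ⊕ Ln F)}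
    (hpt : ∀ p : Pt F, ∃ q : Pt F, g (Sum.inl p) = Sum.inl q ∧
      q.1 = p.1.map (e : (Fin 4 → F) →ₗ[F] (Fin 4 → F)))
    (P Q : Pt F) (t s : Fin 4 → F) (hP : P.1 = span F {t}) (hQ : Q.1 = span F {s})
    (he : e t = s) : g (Sum.inl P) = Sum.inl Q := by
  obtain ⟨q, hq, hq1⟩ := hpt P
  rw [hq]
  refine congrArg Sum.inl (Subtype.ext ?_)
  rw [hq1, hP, Submodule.map_span, Set.image_singleton, hQ,
    show (e : (Fin 4 → F) →ₗ[F] (Fin 4 → F)) t = s from he]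

lemma line_image {e : (Fin 4 → F) ≃ₗ[F] (Fin 4 → F)} {g : (Pt F ⊕ Ln F) ≃ (Pt F ⊕ Ln F)}
    (hln : ∀ ℓ : Ln F, ∃ m : Ln F, g (Sum.inr ℓ) = Sum.inr m ∧
      m.1 = ℓ.1.map (e : (Fin 4 → F) →ₗ[F] (Fin 4 → F)))
    (L M : Ln F) (s t s' t' : Fin 4 → F) (hL : L.1 = span F {s, t})
    (hM : M.1 = span F {s', t'}) (he1 : e s = s') (he2 : e t = t') :
    g (Sum.inr L) = Sum.inr M := by
  obtain ⟨m, hm, hm1⟩ := hln L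
  rw [hm]
  refine congrArg Sum.inr (Subtype.ext ?_)
  rw [hm1, hL, Submodule.map_span, Set.image_pair, hM,
    show (e : (Fin 4 → F) →ₗ[F] (Fin 4 → F)) s = s' from he1,
    show (e : (Fin 4 → F) →ₗ[F] (Fin 4 → F)) t = t' from he2]

lemma distToCode_pair {V : Type*} (Γ : SimpleGraph V) (a b γ : V) :
    distToCode Γ {a, b} γ = min (Γ.dist γ a) (Γ.dist γ b) := by
  have hset : {d | ∃ x ∈ ({a, b} : Set V), Γ.dist γ x = d}
      = {Γ.dist γ a, Γ.dist γ b} := by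
    ext d
    simp only [Set.mem_setOf_eq, Set.mem_insert_iff, Set.mem_singleton_iff]
    constructor
    · rintro ⟨x, (rfl | rfl), rfl⟩
      exacts [Or.inl rfl, Or.inr rfl]
    · rintro (rfl | rfl)
      exacts [⟨a, Or.inl rfl, rfl⟩, ⟨b, Or.inr rfl, rfl⟩]
  unfold distToCode
  rw [hset, csInf_pair]

lemma mid_of_walk_two {x y : Pt F ⊕ Ln F} (p : (W3 F).Walk x y) (h2 : p.length = 2) :
    ∃ m, (W3 F).Adj x m ∧ (W3 F).Adj m y := by
  cases p with
  | nil => simp at h2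
  | cons h q =>
    cases q with
    | nil => simp at h2
    | cons h' q' =>
      have h0 : q'.length = 0 := by simpa using h2
      have := SimpleGraph.Walk.eq_of_length_eq_zero h0
      exact ⟨_, h, this ▸ h'⟩

end Stmt7
open Stmt7

/-- A pair of distinct non-collinear points `⟨u⟩ ≠ ⟨v⟩` (with
`f(u,v) ≠ 0`) of `W₃(q)` forms a neighbour-transitive code of minimum distance `4`. -/
theorem stmt7 (F : Type*) [Field F] [Fintype F]
    (u v : Fin 4 → F) (hu : u ≠ 0) (hv : v ≠ 0)
    (hne : Submodule.span F {u} ≠ Submodule.span F {v})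
    (hf : sform u v ≠ 0) :
    minDist (W3 F)
        {Sum.inl (⟨Submodule.span F {u}, finrank_span_singleton hu⟩ : Pt F),
         Sum.inl (⟨Submodule.span F {v}, finrank_span_singleton hv⟩ : Pt F)} = 4 ∧
    NeighbourTransitive (W3 F)
        {Sum.inl (⟨Submodule.span F {u}, finrank_span_singleton hu⟩ : Pt F),
         Sum.inl (⟨Submodule.span F {v}, finrank_span_singleton hv⟩ : Pt F)} := by
  classical
  set P1 : Pt F := ⟨Submodule.span F {u}, finrank_span_singleton hu⟩ with hP1def
  set P2 : Pt F := ⟨Submodule.span F {v}, finrank_span_singleton hv⟩ with hP2def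
  set A : Pt F ⊕ Ln F := Sum.inl P1 with hAdef
  set B : Pt F ⊕ Ln F := Sum.inl P2 with hBdef
  have hvu0 : sform v u ≠ 0 := by rw [sform_skew]; exact neg_ne_zero.mpr hf
  obtain ⟨w, hw0, huw, hvw⟩ := exists_perp u v
  obtain ⟨z, hsys⟩ := exists_completion rfl hf hw0 huw hvw
  have hAB : A ≠ B := fun hEq => hne (congrArg Subtype.val (Sum.inl.inj hEq))
  -- the walk of length 4
  have haw_u : ∀ a : F, a • w ≠ u := by
    intro a ha
    apply hf
    rw [← ha, sform_smul_left,
      show sform w v = 0 from by rw [sform_skew, hvw, neg_zero], mul_zero]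
  have haw_v : ∀ a : F, a • w ≠ v := by
    intro a ha
    apply hvu0
    rw [← ha, sform_smul_left,
      show sform w u = 0 from by rw [sform_skew, huw, neg_zero], mul_zero]
  set Luw : Ln F := ⟨Submodule.span F {u, w}, isoLine_pair huw hw0 haw_u⟩ with hLuw
  set Lvw : Ln F := ⟨Submodule.span F {v, w}, isoLine_pair hvw hw0 haw_v⟩ with hLvw
  set Pw : Pt F := ⟨Submodule.span F {w}, finrank_span_singleton hw0⟩ with hPw
  have adj1 : (W3 F).Adj A (Sum.inr Luw) :=
    (W3_adj_inl_inr P1 Luw).mpr (Submodule.span_mono (Set.singleton_subset_iff.mpr (by simp)))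
  have adj2 : (W3 F).Adj (Sum.inr Luw) (Sum.inl Pw) :=
    (W3_adj_inr_inl Luw Pw).mpr (Submodule.span_mono (Set.singleton_subset_iff.mpr (by simp)))
  have adj3 : (W3 F).Adj (Sum.inl Pw) (Sum.inr Lvw) :=
    (W3_adj_inl_inr Pw Lvw).mpr (Submodule.span_mono (Set.singleton_subset_iff.mpr (by simp)))
  have adj4 : (W3 F).Adj (Sum.inr Lvw) B :=
    (W3_adj_inr_inl Lvw P2).mpr (Submodule.span_mono (Set.singleton_subset_iff.mpr (by simp)))
  let Wlk : (W3 F).Walk A B := .cons adj1 (.cons adj2 (.cons adj3 (.cons adj4 .nil)))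
  have hle4 : (W3 F).dist A B ≤ 4 := by simpa [Wlk] using SimpleGraph.dist_le Wlk
  have hreach : (W3 F).Reachable A B := Wlk.reachable
  obtain ⟨pth, hpth⟩ := hreach.exists_walk_length_eq_dist
  have heven : Even ((W3 F).dist A B) := by
    rw [← hpth]; exact (walk_parity pth).mpr rfl
  have hne0 : (W3 F).dist A B ≠ 0 := fun h0 => hAB (hreach.dist_eq_zero_iff.mp h0)
  have hne2 : (W3 F).dist A B ≠ 2 := by
    intro h2
    rw [h2] at hpth
    obtain ⟨m, ham, hmb⟩ := mid_of_walk_two pth hpth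
    rcases ham with ⟨p', ℓ', hA', hm', hle'⟩ | ⟨p', ℓ', hA', hm', hle'⟩
    · obtain rfl := Sum.inl.inj hA'
      subst hm'
      rcases hmb with ⟨p'', ℓ'', hC1, hC2, hle''⟩ | ⟨p'', ℓ'', hC1, hC2, hle''⟩
      · exact absurd hC1 (by simp)
      · obtain rfl := Sum.inr.inj hC1
        obtain rfl := Sum.inl.inj hC2
        exact hf (ℓ'.2.2 u (hle' (Submodule.mem_span_singleton_self u))
          v (hle'' (Submodule.mem_span_singleton_self v)))
    · exact absurd hA' (by simp)
  have hdist : (W3 F).dist A B = 4 := by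
    obtain ⟨k, hk⟩ := heven; omega
  have hμ : (sform u v)⁻¹ * sform u v ≠ 0 := by
    rw [inv_mul_cancel₀ hf]; exact one_ne_zero
  constructor
  · -- minimum distance
    have hCset : {d | ∃ x ∈ ({A, B} : Set (Pt F ⊕ Ln F)), ∃ y ∈ ({A, B} : Set (Pt F ⊕ Ln F)),
        x ≠ y ∧ (W3 F).dist x y = d} = {4} := by
      ext d
      simp only [Set.mem_setOf_eq, Set.mem_insert_iff, Set.mem_singleton_iff]
      constructor
      · rintro ⟨x, hx, y, hy, hxy, rfl⟩
        rcases hx with rfl | rfl <;> rcases hy with rfl | rfl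
        · exact absurd rfl hxy
        · exact hdist
        · rw [SimpleGraph.dist_comm]; exact hdist
        · exact absurd rfl hxy
      · rintro rfl
        exact ⟨A, Or.inl rfl, B, Or.inr rfl, hAB, hdist⟩
    show minDist (W3 F) {A, B} = 4
    unfold minDist
    rw [hCset, csInf_singleton]
  constructor
  · -- transitivity on C
    intro x hx y hy
    change x = A ∨ x = B at hx
    change y = A ∨ y = B at hy
    rcases hx with rfl | rfl <;> rcases hy with rfl | rfl
    · exact ⟨Equiv.refl _, fun _ _ => Iff.rfl, fun _ => Iff.rfl, rfl⟩
    · -- A ↦ B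
      obtain ⟨g, hgaut, hgpt, hgln⟩ := exists_gaut (gequiv hsys hsys.swap hf hf)
        ((sform u v)⁻¹ * sform u v) hμ (fun x y => gfun_sim hsys hsys.swap hf x y)
      have hA2B : g A = B :=
        point_image hgpt P1 P2 u v rfl rfl (gfun_eval_u hsys hf v (-u) w z)
      have hB2A : g B = A :=
        point_image hgpt P2 P1 v (-u) rfl (span_neg_singleton u).symm
          (gfun_eval_v hsys hf v (-u) w z)
      exact ⟨g, hgaut, fun γ => pres_two g (Or.inr ⟨hA2B, hB2A⟩) γ, hA2B⟩
    · -- B ↦ A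
      obtain ⟨g, hgaut, hgpt, hgln⟩ := exists_gaut (gequiv hsys.swap hsys hf hf)
        ((sform u v)⁻¹ * sform u v) hμ (fun x y => gfun_sim hsys.swap hsys hf x y)
      have hB2A : g B = A :=
        point_image hgpt P2 P1 v u rfl rfl (gfun_eval_u hsys.swap hf u v w z)
      have hA2B : g A = B :=
        point_image hgpt P1 P2 (-u) v (span_neg_singleton u).symm rfl
          (gfun_eval_v hsys.swap hf u v w z)
      exact ⟨g, hgaut, fun γ => pres_two g (Or.inr ⟨hA2B, hB2A⟩) γ, hB2A⟩
    · exact ⟨Equiv.refl _, fun _ _ => Iff.rfl, fun _ => Iff.rfl, rfl⟩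
  · -- transitivity on C₁
    intro x hx y hy
    have extract : ∀ γ ∈ nbhd (W3 F) ({A, B} : Set (Pt F ⊕ Ln F)) 1,
        ∃ ℓ : Ln F, γ = Sum.inr ℓ ∧
          (Submodule.span F {u} ≤ ℓ.1 ∨ Submodule.span F {v} ≤ ℓ.1) := by
      intro γ hγ
      have h1 : min ((W3 F).dist γ A) ((W3 F).dist γ B) = 1 := by
        rw [← distToCode_pair]; exact hγ
      have h2 : (W3 F).dist γ A = 1 ∨ (W3 F).dist γ B = 1 := by omega
      rcases h2 with h2 | h2
      · have hadj := SimpleGraph.dist_eq_one_iff_adj.mp h2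
        cases γ with
        | inl p => exact absurd hadj (W3_not_adj_inl_inl p P1)
        | inr ℓ => exact ⟨ℓ, rfl, Or.inl ((W3_adj_inr_inl ℓ P1).mp hadj)⟩
      · have hadj := SimpleGraph.dist_eq_one_iff_adj.mp h2
        cases γ with
        | inl p => exact absurd hadj (W3_not_adj_inl_inl p P2)
        | inr ℓ => exact ⟨ℓ, rfl, Or.inr ((W3_adj_inr_inl ℓ P2).mp hadj)⟩
    obtain ⟨ℓ₁, rfl, hx1⟩ := extract x hx
    obtain ⟨ℓ₂, rfl, hy1⟩ := extract y hy
    clear hx hy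
    rcases hx1 with hx1 | hx1 <;> rcases hy1 with hy1 | hy1
    · -- both lines through ⟨u⟩
      obtain ⟨w₁, hw₁0, huw₁, hvw₁, hℓ₁⟩ := line_norm hvu0 hu ℓ₁ hx1
      obtain ⟨z₁, hs₁⟩ := exists_completion rfl hf hw₁0 huw₁ hvw₁
      obtain ⟨w₂, hw₂0, huw₂, hvw₂, hℓ₂⟩ := line_norm hvu0 hu ℓ₂ hy1
      obtain ⟨z₂, hs₂⟩ := exists_completion rfl hf hw₂0 huw₂ hvw₂
      obtain ⟨g, hgaut, hgpt, hgln⟩ := exists_gaut (gequiv hs₁ hs₂ hf hf)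
        ((sform u v)⁻¹ * sform u v) hμ (fun x y => gfun_sim hs₁ hs₂ hf x y)
      refine ⟨g, hgaut, ?_, ?_⟩
      · intro γ
        exact pres_two g (Or.inl
          ⟨point_image hgpt P1 P1 u u rfl rfl (gfun_eval_u hs₁ hf u v w₂ z₂),
           point_image hgpt P2 P2 v v rfl rfl (gfun_eval_v hs₁ hf u v w₂ z₂)⟩) γ
      · exact line_image hgln ℓ₁ ℓ₂ u w₁ u w₂ hℓ₁ hℓ₂
          (gfun_eval_u hs₁ hf u v w₂ z₂) (gfun_eval_w hs₁ hf u v w₂ z₂)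
    · -- ℓ₁ through ⟨u⟩, ℓ₂ through ⟨v⟩
      obtain ⟨w₁, hw₁0, huw₁, hvw₁, hℓ₁⟩ := line_norm hvu0 hu ℓ₁ hx1
      obtain ⟨z₁, hs₁⟩ := exists_completion rfl hf hw₁0 huw₁ hvw₁
      obtain ⟨w₂, hw₂0, hvw₂, huw₂, hℓ₂⟩ := line_norm hf hv ℓ₂ hy1
      obtain ⟨z₂, hs₂⟩ := exists_completion rfl hf hw₂0 huw₂ hvw₂
      obtain ⟨g, hgaut, hgpt, hgln⟩ := exists_gaut (gequiv hs₁ hs₂.swap hf hf)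
        ((sform u v)⁻¹ * sform u v) hμ (fun x y => gfun_sim hs₁ hs₂.swap hf x y)
      refine ⟨g, hgaut, ?_, ?_⟩
      · intro γ
        exact pres_two g (Or.inr
          ⟨point_image hgpt P1 P2 u v rfl rfl (gfun_eval_u hs₁ hf v (-u) w₂ z₂),
           point_image hgpt P2 P1 v (-u) rfl (span_neg_singleton u).symm
             (gfun_eval_v hs₁ hf v (-u) w₂ z₂)⟩) γ
      · exact line_image hgln ℓ₁ ℓ₂ u w₁ v w₂ hℓ₁ hℓ₂
          (gfun_eval_u hs₁ hf v (-u) w₂ z₂) (gfun_eval_w hs₁ hf v (-u) w₂ z₂)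
    · -- ℓ₁ through ⟨v⟩, ℓ₂ through ⟨u⟩
      obtain ⟨w₁, hw₁0, hvw₁, huw₁, hℓ₁⟩ := line_norm hf hv ℓ₁ hx1
      obtain ⟨z₁, hs₁⟩ := exists_completion rfl hf hw₁0 huw₁ hvw₁
      obtain ⟨w₂, hw₂0, huw₂, hvw₂, hℓ₂⟩ := line_norm hvu0 hu ℓ₂ hy1
      obtain ⟨z₂, hs₂⟩ := exists_completion rfl hf hw₂0 huw₂ hvw₂
      obtain ⟨g, hgaut, hgpt, hgln⟩ := exists_gaut (gequiv hs₁.swap hs₂ hf hf)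
        ((sform u v)⁻¹ * sform u v) hμ (fun x y => gfun_sim hs₁.swap hs₂ hf x y)
      refine ⟨g, hgaut, ?_, ?_⟩
      · intro γ
        exact pres_two g (Or.inr
          ⟨point_image hgpt P1 P2 (-u) v (span_neg_singleton u).symm rfl
             (gfun_eval_v hs₁.swap hf u v w₂ z₂),
           point_image hgpt P2 P1 v u rfl rfl (gfun_eval_u hs₁.swap hf u v w₂ z₂)⟩) γ
      · exact line_image hgln ℓ₁ ℓ₂ v w₁ u w₂ hℓ₁ hℓ₂
          (gfun_eval_u hs₁.swap hf u v w₂ z₂) (gfun_eval_w hs₁.swap hf u v w₂ z₂)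
    · -- both lines through ⟨v⟩
      obtain ⟨w₁, hw₁0, hvw₁, huw₁, hℓ₁⟩ := line_norm hf hv ℓ₁ hx1
      obtain ⟨z₁, hs₁⟩ := exists_completion rfl hf hw₁0 huw₁ hvw₁
      obtain ⟨w₂, hw₂0, hvw₂, huw₂, hℓ₂⟩ := line_norm hf hv ℓ₂ hy1
      obtain ⟨z₂, hs₂⟩ := exists_completion rfl hf hw₂0 huw₂ hvw₂
      obtain ⟨g, hgaut, hgpt, hgln⟩ := exists_gaut (gequiv hs₁.swap hs₂.swap hf hf)
        ((sform u v)⁻¹ * sform u v) hμ (fun x y => gfun_sim hs₁.swap hs₂.swap hf x y)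
      refine ⟨g, hgaut, ?_, ?_⟩
      · intro γ
        exact pres_two g (Or.inl
          ⟨point_image hgpt P1 P1 (-u) (-u) (span_neg_singleton u).symm
             (span_neg_singleton u).symm (gfun_eval_v hs₁.swap hf v (-u) w₂ z₂),
           point_image hgpt P2 P2 v v rfl rfl (gfun_eval_u hs₁.swap hf v (-u) w₂ z₂)⟩) γ
      · exact line_image hgln ℓ₁ ℓ₂ v w₁ v w₂ hℓ₁ hℓ₂
          (gfun_eval_u hs₁.swap hf v (-u) w₂ z₂) (gfun_eval_w hs₁.swap hf v (-u) w₂ z₂)
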